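/- Let σ_x = !![0, 1; 1, 0] and σ_z = !![1, 0; 0, −1] be the Pauli matrices in Matrix (Fin 2) (Fin 2) ℂ. Then the maximum over unit vectors ψ ∈ ℂ² of |⟨ψ, σ_x ψ⟩| + |⟨ψ, σ_z ψ⟩| equals √2; that is, |⟨ψ, σ_x ψ⟩| + |⟨ψ, σ_z ψ⟩| ≤ √2 for every unit vector ψ, with equality for some unit vector ψ. (Consequently the corresponding pair of qubit-input channels satisfies ‖Φ₀ − Φ₁‖_NE = √2, while ‖Φ₀ − Φ₁‖_LOCC = 2.) -/

import Mathlib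

open Matrix Kronecker BigOperators ComplexOrder

noncomputable def posSemidefSqrtOld {n : Type*} [Fintype n] [DecidableEq n] {A : Matrix n n ℂ}
    (hA : A.PosSemidef) : Matrix n n ℂ :=
  hA.1.eigenvectorUnitary.1 * diagonal ((↑) ∘ Real.sqrt ∘ hA.1.eigenvalues) *
    (star hA.1.eigenvectorUnitary : Matrix n n ℂ)

noncomputable def traceNorm {n : Type*} [Fintype n] [DecidableEq n] (A : Matrix n n ℂ) : ℝ :=
  ((posSemidefSqrtOld (Matrix.posSemidef_conjTranspose_mul_self A)).trace).re

def IsDensity {n : Type*} [Fintype n] (ρ : Matrix n n ℂ) : Prop :=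
  ρ.PosSemidef ∧ ρ.trace = 1

def tensorId {X Y Z : Type*} (Φ : Matrix X X ℂ → Matrix Y Y ℂ)
    (ρ : Matrix (X × Z) (X × Z) ℂ) : Matrix (Y × Z) (Y × Z) ℂ :=
  Matrix.of fun p q => Φ (Matrix.of fun x x' => ρ (x, p.2) (x', q.2)) p.1 q.1

noncomputable def ChoiMatrix {X Y : Type*} [Fintype X] [DecidableEq X] [Fintype Y]
    (Φ : Matrix X X ℂ → Matrix Y Y ℂ) : Matrix (Y × X) (Y × X) ℂ :=
  ∑ j : X, ∑ k : X, (Φ (Matrix.single j k 1)) ⊗ₖ (Matrix.single j k 1)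

def IsChannel {X Y : Type*} [Fintype X] [DecidableEq X] [Fintype Y]
    (Φ : Matrix X X ℂ →ₗ[ℂ] Matrix Y Y ℂ) : Prop :=
  (∀ M, (Φ M).trace = M.trace) ∧ (ChoiMatrix (⇑Φ)).PosSemidef

def SeparableOp {Y Z : Type*} [Fintype Y] [Fintype Z]
    (P : Matrix (Y × Z) (Y × Z) ℂ) : Prop :=
  ∃ (N : ℕ) (Q : Fin N → Matrix Y Y ℂ) (R : Fin N → Matrix Z Z ℂ),
    (∀ i, (Q i).PosSemidef) ∧ (∀ i, (R i).PosSemidef) ∧ P = ∑ i, Q i ⊗ₖ R i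

def partialTranspose {Y Z : Type*} (M : Matrix (Y × Z) (Y × Z) ℂ) :
    Matrix (Y × Z) (Y × Z) ℂ :=
  Matrix.of fun p q => M (p.1, q.2) (q.1, p.2)

def IsPPT {Y Z : Type*} [Fintype Y] [Fintype Z] (M : Matrix (Y × Z) (Y × Z) ℂ) : Prop :=
  M.PosSemidef ∧ (partialTranspose M).PosSemidef


lemma pauli_x_exp (ψ : Fin 2 → ℂ) :
    star ψ ⬝ᵥ (!![0, 1; 1, 0] : Matrix (Fin 2) (Fin 2) ℂ).mulVec ψ
      = (starRingEnd ℂ) (ψ 0) * ψ 1 + (starRingEnd ℂ) (ψ 1) * ψ 0 := by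
  simp [dotProduct, Matrix.mulVec, Fin.sum_univ_two, Pi.star_apply]

lemma pauli_z_exp (ψ : Fin 2 → ℂ) :
    star ψ ⬝ᵥ (!![1, 0; 0, -1] : Matrix (Fin 2) (Fin 2) ℂ).mulVec ψ
      = ((‖ψ 0‖)^2 - (‖ψ 1‖)^2 : ℝ) := by
  rw [show ((‖ψ 0‖)^2 - (‖ψ 1‖)^2 : ℝ)
      = Complex.normSq (ψ 0) - Complex.normSq (ψ 1) by
    rw [Complex.sq_norm, Complex.sq_norm]]
  simp [dotProduct, Matrix.mulVec, Fin.sum_univ_two, Pi.star_apply,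
    Complex.normSq_eq_conj_mul_self]
  ring

lemma norm_cond (ψ : Fin 2 → ℂ) (h : star ψ ⬝ᵥ ψ = 1) :
    (‖ψ 0‖)^2 + (‖ψ 1‖)^2 = 1 := by
  have : ((Complex.normSq (ψ 0) + Complex.normSq (ψ 1) : ℝ) : ℂ) = 1 := by
    rw [← h]
    simp [dotProduct, Fin.sum_univ_two, Pi.star_apply,
      Complex.normSq_eq_conj_mul_self]
  have h2 : (Complex.normSq (ψ 0) + Complex.normSq (ψ 1) : ℝ) = 1 := by
    exact_mod_cast this
  rw [Complex.sq_norm, Complex.sq_norm]; exact h2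

lemma real_ineq (u v : ℝ) (hu : 0 ≤ u) (hv : 0 ≤ v) (h : u^2 + v^2 = 1) :
    2*u*v + |u^2 - v^2| ≤ Real.sqrt 2 := by
  have h0 : 0 ≤ 2*u*v + |u^2 - v^2| := by positivity
  have hsq : (2*u*v + |u^2 - v^2|)^2 ≤ 2 := by
    nlinarith [sq_abs (u^2 - v^2), sq_nonneg (2*u*v - |u^2 - v^2|)]
  calc 2*u*v + |u^2 - v^2| = Real.sqrt ((2*u*v + |u^2 - v^2|)^2) := by
        rw [Real.sqrt_sq h0]
    _ ≤ Real.sqrt 2 := Real.sqrt_le_sqrt hsq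

/-- `max_ψ |⟨ψ, σ_x ψ⟩| + |⟨ψ, σ_z ψ⟩| = √2` over unit vectors `ψ ∈ ℂ²`. -/
theorem pauli_xz_expectation_max_sqrt_two :
    (∀ ψ : Fin 2 → ℂ, star ψ ⬝ᵥ ψ = 1 →
      ‖star ψ ⬝ᵥ (!![0, 1; 1, 0] : Matrix (Fin 2) (Fin 2) ℂ).mulVec ψ‖ +
        ‖star ψ ⬝ᵥ (!![1, 0; 0, -1] : Matrix (Fin 2) (Fin 2) ℂ).mulVec ψ‖
      ≤ Real.sqrt 2) ∧
    (∃ ψ : Fin 2 → ℂ, star ψ ⬝ᵥ ψ = 1 ∧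
      ‖star ψ ⬝ᵥ (!![0, 1; 1, 0] : Matrix (Fin 2) (Fin 2) ℂ).mulVec ψ‖ +
        ‖star ψ ⬝ᵥ (!![1, 0; 0, -1] : Matrix (Fin 2) (Fin 2) ℂ).mulVec ψ‖
      = Real.sqrt 2) := by
  constructor
  · intro ψ hψ
    set a := ψ 0; set b := ψ 1
    have hn := norm_cond ψ hψ
    rw [pauli_x_exp, pauli_z_exp]
    have hx : ‖(starRingEnd ℂ) a * b + (starRingEnd ℂ) b * a‖
        ≤ 2 * ‖a‖ * ‖b‖ := by
      calc ‖(starRingEnd ℂ) a * b + (starRingEnd ℂ) b * a‖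
          ≤ ‖(starRingEnd ℂ) a * b‖ + ‖(starRingEnd ℂ) b * a‖ :=
            norm_add_le _ _
        _ = 2 * ‖a‖ * ‖b‖ := by
            simp [norm_mul]; ring
    have hz : ‖(((‖a‖)^2 - (‖b‖)^2 : ℝ) : ℂ)‖
        = |(‖a‖)^2 - (‖b‖)^2| := by rw [Complex.norm_real, Real.norm_eq_abs]
    rw [hz]
    have := real_ineq (‖a‖) (‖b‖)
      (norm_nonneg a) (norm_nonneg b) hn
    linarith
  · have h2 : (0:ℝ) ≤ Real.sqrt 2 := Real.sqrt_nonneg 2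
    have hle : Real.sqrt 2 ≤ 2 := by
      nlinarith [Real.sq_sqrt (by norm_num : (0:ℝ) ≤ 2), Real.sqrt_nonneg 2]
    obtain ⟨a, ha0, ha⟩ : ∃ a : ℝ, 0 ≤ a ∧ a^2 = (2+Real.sqrt 2)/4 :=
      ⟨Real.sqrt _, Real.sqrt_nonneg _, Real.sq_sqrt (by linarith)⟩
    obtain ⟨b, hb0, hb⟩ : ∃ b : ℝ, 0 ≤ b ∧ b^2 = (2-Real.sqrt 2)/4 :=
      ⟨Real.sqrt _, Real.sqrt_nonneg _, Real.sq_sqrt (by linarith)⟩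
    have hsq : (a*b)^2 = (Real.sqrt 2/4)^2 := by
      rw [mul_pow, ha, hb, div_pow, Real.sq_sqrt (by norm_num : (0:ℝ) ≤ 2)]
      nlinarith [Real.sq_sqrt (by norm_num : (0:ℝ) ≤ 2)]
    have hab : a * b = Real.sqrt 2 / 4 := by
      calc a*b = Real.sqrt ((a*b)^2) := (Real.sqrt_sq (mul_nonneg ha0 hb0)).symm
        _ = Real.sqrt ((Real.sqrt 2/4)^2) := by rw [hsq]
        _ = Real.sqrt 2/4 := Real.sqrt_sq (by positivity)
    refine ⟨![(a:ℂ), (b:ℂ)], ?_, ?_⟩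
    · have hd : star (![(a:ℂ), (b:ℂ)]) ⬝ᵥ ![(a:ℂ), (b:ℂ)] = ((a^2 + b^2 : ℝ) : ℂ) := by
        simp [dotProduct, Fin.sum_univ_two, Pi.star_apply, Complex.conj_ofReal]
        ring
      rw [hd, ha, hb]; norm_num [show (2 + Real.sqrt 2) / 4 + (2 - Real.sqrt 2) / 4 = 1 by ring]
    · rw [pauli_x_exp, pauli_z_exp]
      simp only [Matrix.cons_val_zero, Matrix.cons_val_one, Matrix.head_cons,
        Complex.conj_ofReal, Complex.norm_real, Real.norm_eq_abs]
      rw [show ((a:ℂ)*(b:ℂ) + (b:ℂ)*(a:ℂ)) = ((2*(a*b) : ℝ) : ℂ) by push_cast; ring,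
        Complex.norm_real, Real.norm_eq_abs]
      rw [show (|a|:ℝ)^2 - |b|^2 = Real.sqrt 2 / 2 by
        rw [sq_abs, sq_abs, ha, hb]; ring, hab]
      rw [abs_of_nonneg (by positivity : (0:ℝ) ≤ 2*(Real.sqrt 2/4)),
        abs_of_nonneg (by positivity : (0:ℝ) ≤ Real.sqrt 2/2)]
      ring
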